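/- For every nonnegative integer n, positive integer p, nonzero constant a, and x > 0, x^{nλ} · ((x^{1−λ} d/dx)^n applied to e^{a x^p})(x) = p^n · Bel_{n,λ/p}(a x^p) · e^{a x^p}. -/

import Mathlib

open Finset

/-- Degenerate falling factorial `(x)_{n,λ}`. -/
noncomputable def degFall (lam x : ℝ) (n : ℕ) : ℝ := ∏ i ∈ Finset.range n, (x - i * lam)

/-- Degenerate Bell polynomial `Bel_{n,μ}(y) = e^{-y} ∑_{k≥0} (k)_{n,μ} y^k / k!`. -/
noncomputable def Bel (mu y : ℝ) (n : ℕ) : ℝ :=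
  Real.exp (-y) * ∑' k : ℕ, degFall mu (k : ℝ) n * y ^ k / (Nat.factorial k)

/-- The operator `f ↦ (x ↦ x^{1-λ} f'(x))`. -/
noncomputable def Lop (lam : ℝ) (f : ℝ → ℝ) : ℝ → ℝ := fun x => x ^ ((1 : ℝ) - lam) * deriv f x

open Filter

lemma summable_master (B R : ℝ) (hB : 0 ≤ B) (hR : 1 ≤ R) (m : ℕ) :
    Summable (fun k : ℕ => (k + B) ^ m * R ^ k / (Nat.factorial k)) := by
  apply summable_of_ratio_norm_eventually_le (r := 1/2) (by norm_num)
  rw [eventually_atTop]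
  refine ⟨max 1 (Nat.ceil ((2:ℝ)^(m+1) * R)), fun k hk => ?_⟩
  have hk1 : 1 ≤ k := le_of_max_le_left hk
  have hk2 : (2:ℝ)^(m+1) * R ≤ k := by
    calc (2:ℝ)^(m+1) * R ≤ Nat.ceil ((2:ℝ)^(m+1) * R) := Nat.le_ceil _
    _ ≤ k := by exact_mod_cast le_of_max_le_right hk
  have hkB : (0:ℝ) < k + B := by positivity
  have hRpos : (0:ℝ) < R := lt_of_lt_of_le one_pos hR
  have hfact : ((Nat.factorial (k+1)) : ℝ) = ((k:ℝ)+1) * Nat.factorial k := by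
    rw [Nat.factorial_succ]; push_cast; ring
  rw [Real.norm_eq_abs, Real.norm_eq_abs, abs_of_nonneg (by positivity),
    abs_of_nonneg (by positivity), div_le_iff₀ (by positivity), hfact]
  have hpow : ((k:ℝ)+1+B)^m ≤ 2^m * (k+B)^m := by
    have h1k : (1:ℝ) ≤ k := by exact_mod_cast hk1
    calc ((k:ℝ)+1+B)^m ≤ (2*(k+B))^m := by
          apply pow_le_pow_left₀ (by positivity) (by linarith)
      _ = 2^m * (k+B)^m := mul_pow _ _ _
  push_cast
  calc ((k:ℝ)+1+B)^m * R^(k+1) = (((k:ℝ)+1+B)^m) * (R^k * R) := by ring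
    _ ≤ (2^m * (k+B)^m) * (R^k * R) :=
        mul_le_mul_of_nonneg_right hpow (by positivity)
    _ ≤ 1/2 * ((k+B)^m * R^k) * ((k:ℝ)+1) := by
        have h5 : (2:ℝ)^m * R * 2 ≤ (k:ℝ)+1 := by
          have h3 : (2:ℝ)^(m+1) * R ≤ (k:ℝ) := hk2
          rw [pow_succ] at h3; nlinarith
        nlinarith [mul_le_mul_of_nonneg_right h5
          (by positivity : (0:ℝ) ≤ (k+B)^m * R^k)]
    _ = 1/2 * ((k+B)^m * R^k / Nat.factorial k) * (((k:ℝ)+1) * Nat.factorial k) := by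
        have hF : ((Nat.factorial k : ℝ)) ≠ 0 := by positivity
        field_simp


lemma degFall_abs_le (mu : ℝ) (k n : ℕ) :
    |degFall mu (k : ℝ) n| ≤ ((k : ℝ) + n * |mu|) ^ n := by
  rw [degFall, Finset.abs_prod]
  calc ∏ i ∈ Finset.range n, |(k : ℝ) - i * mu|
      ≤ ∏ _i ∈ Finset.range n, ((k : ℝ) + n * |mu|) := by
        apply Finset.prod_le_prod (fun i _ => abs_nonneg _)
        intro i hi
        have hi' : (i : ℝ) ≤ n := by
          have := Finset.mem_range.mp hi; exact_mod_cast this.le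
        calc |(k : ℝ) - i * mu| ≤ |(k:ℝ)| + |(i:ℝ) * mu| := abs_sub _ _
          _ = (k:ℝ) + i * |mu| := by
              rw [abs_mul, abs_of_nonneg (Nat.cast_nonneg k), abs_of_nonneg (Nat.cast_nonneg i)]
          _ ≤ (k:ℝ) + n * |mu| := by
              have := mul_le_mul_of_nonneg_right hi' (abs_nonneg mu); linarith
    _ = ((k : ℝ) + n * |mu|) ^ n := by rw [Finset.prod_const, Finset.card_range]

lemma degFall_succ (mu : ℝ) (x : ℝ) (n : ℕ) :
    degFall mu x (n + 1) = degFall mu x n * (x - n * mu) := Finset.prod_range_succ _ _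

noncomputable def Sfun (mu : ℝ) (n : ℕ) (y : ℝ) : ℝ :=
  ∑' k : ℕ, degFall mu (k : ℝ) n * y ^ k / (Nat.factorial k)


lemma summable_S (mu y : ℝ) (n : ℕ) :
    Summable (fun k : ℕ => degFall mu (k : ℝ) n * y ^ k / (Nat.factorial k)) := by
  set B := (n : ℝ) * |mu| with hBdef
  set R := |y| + 1 with hRdef
  have hB : 0 ≤ B := by positivity
  have hR : 1 ≤ R := by simp [hRdef]
  apply Summable.of_norm_bounded (summable_master B R hB hR n)
  intro k
  rw [Real.norm_eq_abs, abs_div, abs_mul, Nat.abs_cast, abs_pow]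
  have h1 : |degFall mu (k:ℝ) n| ≤ ((k:ℝ) + B) ^ n := degFall_abs_le mu k n
  have h2 : |y| ^ k ≤ R ^ k := by
    apply pow_le_pow_left₀ (abs_nonneg y); simp [hRdef]
  apply div_le_div_of_nonneg_right _ (by positivity : (0:ℝ) ≤ Nat.factorial k)
  exact mul_le_mul h1 h2 (by positivity) (by positivity)


lemma summable_kS (mu y : ℝ) (n : ℕ) :
    Summable (fun k : ℕ => degFall mu (k : ℝ) n * ((k : ℝ) * y ^ k) / (Nat.factorial k)) := by
  set B := (n : ℝ) * |mu| + 1 with hBdef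
  set R := |y| + 1 with hRdef
  have hB : 0 ≤ B := by positivity
  have hR : 1 ≤ R := by simp [hRdef]
  apply Summable.of_norm_bounded (summable_master B R hB hR (n+1))
  intro k
  rw [Real.norm_eq_abs, abs_div, abs_mul, Nat.abs_cast, abs_mul, Nat.abs_cast, abs_pow]
  apply div_le_div_of_nonneg_right _ (by positivity : (0:ℝ) ≤ Nat.factorial k)
  have h1 : |degFall mu (k:ℝ) n| ≤ ((k:ℝ) + B) ^ n := by
    refine (degFall_abs_le mu k n).trans ?_
    apply pow_le_pow_left₀ (by positivity)
    simp [hBdef]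
  have h2 : (k:ℝ) * |y| ^ k ≤ ((k:ℝ) + B) * R ^ k := by
    apply mul_le_mul (by simp [hBdef]; linarith [abs_nonneg mu, mul_nonneg (Nat.cast_nonneg (α := ℝ) n) (abs_nonneg mu)])
      (pow_le_pow_left₀ (abs_nonneg y) (by simp [hRdef]) k) (by positivity) (by positivity)
  calc |degFall mu (k:ℝ) n| * ((k:ℝ) * |y| ^ k)
      ≤ ((k:ℝ) + B) ^ n * (((k:ℝ) + B) * R ^ k) :=
        mul_le_mul h1 h2 (by positivity) (by positivity)
    _ = ((k:ℝ) + B) ^ (n+1) * R ^ k := by ring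

lemma hasDerivAt_S (mu : ℝ) (n : ℕ) (y : ℝ) :
    HasDerivAt (Sfun mu n)
      (∑' k : ℕ, degFall mu (k : ℝ) n * ((k : ℝ) * y ^ (k - 1)) / (Nat.factorial k)) y := by
  set B := (n : ℝ) * |mu| + 1 with hBdef
  set R := |y| + 1 with hRdef
  have hR : 1 ≤ R := by simp [hRdef]
  have hR0 : 0 < R := by linarith
  apply hasDerivAt_tsum_of_isPreconnected
    (summable_master B R (by positivity) hR (n+1)) Metric.isOpen_ball
    (convex_ball (0:ℝ) R).isPreconnected
    (g' := fun (k : ℕ) (z : ℝ) => degFall mu (k:ℝ) n * ((k:ℝ) * z ^ (k-1)) / (Nat.factorial k))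
    (y₀ := 0)
  · intro k z hz
    exact ((hasDerivAt_pow k z).const_mul (degFall mu (k:ℝ) n)).div_const _
  · intro k z hz
    rw [Metric.mem_ball, Real.dist_eq, sub_zero] at hz
    rw [Real.norm_eq_abs, abs_div, abs_mul, Nat.abs_cast, abs_mul, Nat.abs_cast, abs_pow]
    apply div_le_div_of_nonneg_right _ (by positivity : (0:ℝ) ≤ Nat.factorial k)
    have h1 : |degFall mu (k:ℝ) n| ≤ ((k:ℝ) + B) ^ n := by
      refine (degFall_abs_le mu k n).trans ?_
      apply pow_le_pow_left₀ (by positivity)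
      simp [hBdef]
    have h2 : (k:ℝ) * |z| ^ (k-1) ≤ ((k:ℝ) + B) * R ^ k := by
      rcases Nat.eq_zero_or_pos k with hk | hk
      · subst hk; simp; positivity
      · apply mul_le_mul (by simp [hBdef]; linarith [mul_nonneg (Nat.cast_nonneg (α := ℝ) n) (abs_nonneg mu)]) ?_ (by positivity) (by positivity)
        calc |z| ^ (k-1) ≤ R ^ (k-1) := pow_le_pow_left₀ (abs_nonneg z) hz.le _
          _ ≤ R ^ k := pow_le_pow_right₀ hR (Nat.sub_le k 1)
    calc |degFall mu (k:ℝ) n| * ((k:ℝ) * |z| ^ (k-1))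
        ≤ ((k:ℝ) + B) ^ n * (((k:ℝ) + B) * R ^ k) :=
          mul_le_mul h1 h2 (by positivity) (by positivity)
      _ = ((k:ℝ) + B) ^ (n+1) * R ^ k := by ring
  · rw [Metric.mem_ball, dist_self]; exact hR0
  · exact summable_S mu 0 n
  · rw [Metric.mem_ball, Real.dist_eq, sub_zero, hRdef]
    linarith

lemma S_rec (mu : ℝ) (n : ℕ) (y : ℝ) :
    Sfun mu (n+1) y =
      y * (∑' k : ℕ, degFall mu (k : ℝ) n * ((k : ℝ) * y ^ (k - 1)) / (Nat.factorial k))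
        - ((n : ℝ) * mu) * Sfun mu n y := by
  have hy : y * (∑' k : ℕ, degFall mu (k : ℝ) n * ((k : ℝ) * y ^ (k - 1)) / (Nat.factorial k))
      = ∑' k : ℕ, degFall mu (k : ℝ) n * ((k : ℝ) * y ^ k) / (Nat.factorial k) := by
    rw [← tsum_mul_left]
    congr 1; funext k
    rcases Nat.eq_zero_or_pos k with hk | hk
    · subst hk; simp
    · have : y * y ^ (k - 1) = y ^ k := by
        rw [← pow_succ']
        congr 1
        omega
      rw [mul_div_assoc'] at *
      rw [← this]
      ring
  have hmu : ((n : ℝ) * mu) * Sfun mu n y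
      = ∑' k : ℕ, ((n : ℝ) * mu) * (degFall mu (k : ℝ) n * y ^ k / (Nat.factorial k)) := by
    rw [Sfun, ← tsum_mul_left]
  rw [hy, hmu, Sfun, ← Summable.tsum_sub (summable_kS mu y n) ((summable_S mu y n).mul_left _)]
  congr 1; funext k
  rw [degFall_succ]
  field_simp

lemma S_zero (mu y : ℝ) : Sfun mu 0 y = Real.exp y := by
  rw [Real.exp_eq_exp_ℝ, NormedSpace.exp_eq_tsum_div, Sfun]
  congr 1; funext k
  simp [degFall]


lemma key_iterate (lam a : ℝ) (p : ℕ) (hp : 0 < p) (n : ℕ) :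
    ∀ z : ℝ, 0 < z → (Lop lam)^[n] (fun y => Real.exp (a * y ^ p)) z
      = (p : ℝ) ^ n * z ^ (-((n : ℝ) * lam)) * Sfun (lam / p) n (a * z ^ p) := by
  induction n with
  | zero =>
    intro z hz
    simp [S_zero, Real.rpow_zero]
  | succ n ih =>
    intro z hz
    set mu := lam / (p:ℝ) with hmu
    have hpR : ((p:ℝ)) ≠ 0 := by positivity
    set D := ∑' k : ℕ, degFall mu (k : ℝ) n * ((k : ℝ) * (a * z ^ p) ^ (k - 1)) / (Nat.factorial k) with hD
    -- derivative of the closed form G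
    have h1 : HasDerivAt (fun w : ℝ => w ^ (-((n : ℝ) * lam)))
        ((-((n : ℝ) * lam)) * z ^ (-((n : ℝ) * lam) - 1)) z :=
      Real.hasDerivAt_rpow_const (Or.inl hz.ne')
    have h2 : HasDerivAt (fun w : ℝ => a * w ^ p) (a * ((p : ℝ) * z ^ (p - 1))) z :=
      (hasDerivAt_pow p z).const_mul a
    have h3 : HasDerivAt (Sfun mu n) D (a * z ^ p) := hasDerivAt_S mu n (a * z ^ p)
    have h4 : HasDerivAt (fun w : ℝ => Sfun mu n (a * w ^ p))
        (D * (a * ((p : ℝ) * z ^ (p - 1)))) z := HasDerivAt.comp (h := fun w : ℝ => a * w ^ p) z h3 h2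
    have h5 : HasDerivAt
        (fun w : ℝ => (p : ℝ) ^ n * (w ^ (-((n : ℝ) * lam)) * Sfun mu n (a * w ^ p)))
        ((p : ℝ) ^ n * ((-((n : ℝ) * lam)) * z ^ (-((n : ℝ) * lam) - 1) * Sfun mu n (a * z ^ p)
          + z ^ (-((n : ℝ) * lam)) * (D * (a * ((p : ℝ) * z ^ (p - 1)))))) z :=
      (h1.mul h4).const_mul _
    -- the iterate agrees with the closed form near z
    have hev : (Lop lam)^[n] (fun y => Real.exp (a * y ^ p))
        =ᶠ[nhds z] fun w => (p : ℝ) ^ n * (w ^ (-((n : ℝ) * lam)) * Sfun mu n (a * w ^ p)) := by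
      filter_upwards [IsOpen.mem_nhds isOpen_Ioi hz] with w hw
      rw [ih w hw]; ring
    have hderiv : deriv ((Lop lam)^[n] (fun y => Real.exp (a * y ^ p))) z
        = (p : ℝ) ^ n * ((-((n : ℝ) * lam)) * z ^ (-((n : ℝ) * lam) - 1) * Sfun mu n (a * z ^ p)
          + z ^ (-((n : ℝ) * lam)) * (D * (a * ((p : ℝ) * z ^ (p - 1))))) := by
      rw [hev.deriv_eq, h5.deriv]
    rw [Function.iterate_succ_apply', Lop, hderiv]
    -- now pure algebra with rpow
    have hcast : ((p - 1 : ℕ) : ℝ) = (p : ℝ) - 1 := by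
      have : 1 ≤ p := hp; push_cast [this]; ring
    have e1 : z ^ ((1:ℝ) - lam) * z ^ (-((n : ℝ) * lam) - 1)
        = z ^ (-(((n:ℕ)+1 : ℝ) * lam)) := by
      rw [← Real.rpow_add hz]; congr 1; push_cast; ring
    have e2 : z ^ ((1:ℝ) - lam) * (z ^ (-((n : ℝ) * lam)) * z ^ (p - 1 : ℕ))
        = z ^ (-(((n:ℕ)+1 : ℝ) * lam)) * z ^ p := by
      rw [← Real.rpow_natCast z (p-1), ← Real.rpow_natCast z p,
        ← Real.rpow_add hz, ← Real.rpow_add hz, ← Real.rpow_add hz]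
      congr 1; rw [hcast]; push_cast; ring
    have hrec := S_rec mu n (a * z ^ p)
    rw [← hD] at hrec
    have hmul : ((n : ℝ) * mu) * (p : ℝ) = (n : ℝ) * lam := by
      rw [hmu]; field_simp
    push_cast
    rw [hrec]
    have expand : z ^ ((1:ℝ) - lam) *
        ((p : ℝ) ^ n * ((-((n : ℝ) * lam)) * z ^ (-((n : ℝ) * lam) - 1) * Sfun mu n (a * z ^ p)
          + z ^ (-((n : ℝ) * lam)) * (D * (a * ((p : ℝ) * z ^ (p - 1))))))
        = (p : ℝ) ^ n * ((-((n : ℝ) * lam)) * (z ^ ((1:ℝ) - lam) * z ^ (-((n : ℝ) * lam) - 1)) * Sfun mu n (a * z ^ p)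
          + (z ^ ((1:ℝ) - lam) * (z ^ (-((n : ℝ) * lam)) * z ^ (p - 1 : ℕ))) * (D * (a * (p : ℝ)))) := by
      ring
    rw [expand, e1, e2]
    push_cast
    have : (n:ℝ) * lam = ((n : ℝ) * mu) * (p : ℝ) := hmul.symm
    rw [this]
    ring
/-- `x^{nλ} ((x^{1−λ} d/dx)^n e^{a x^p})(x) = p^n Bel_{n,λ/p}(a x^p) e^{a x^p}`. -/
theorem lop_iterate_exp_pow (lam a : ℝ) (ha : a ≠ 0) (p : ℕ) (hp : 0 < p)
    (n : ℕ) (x : ℝ) (hx : 0 < x) :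
    x ^ ((n : ℝ) * lam) * (Lop lam)^[n] (fun y => Real.exp (a * y ^ p)) x =
      (p : ℝ) ^ n * Bel (lam / p) (a * x ^ p) n * Real.exp (a * x ^ p) := by

  rw [key_iterate lam a p hp n x hx]
  have h1 : x ^ ((n : ℝ) * lam) * x ^ (-((n : ℝ) * lam)) = 1 := by
    rw [← Real.rpow_add hx]; simp
  have hBel : Bel (lam / p) (a * x ^ p) n
      = Real.exp (-(a * x ^ p)) * Sfun (lam / p) n (a * x ^ p) := rfl
  rw [hBel]
  have h2 : Real.exp (-(a * x ^ p)) * Real.exp (a * x ^ p) = 1 := by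
    rw [← Real.exp_add]; simp
  calc x ^ ((n : ℝ) * lam) *
        ((p : ℝ) ^ n * x ^ (-((n : ℝ) * lam)) * Sfun (lam / p) n (a * x ^ p))
      = (x ^ ((n : ℝ) * lam) * x ^ (-((n : ℝ) * lam))) *
          ((p : ℝ) ^ n * Sfun (lam / p) n (a * x ^ p)) := by ring
    _ = (p : ℝ) ^ n * Sfun (lam / p) n (a * x ^ p) := by rw [h1]; ring
    _ = (p : ℝ) ^ n * (Real.exp (-(a * x ^ p)) * Sfun (lam / p) n (a * x ^ p)) *
          Real.exp (a * x ^ p) := by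
        rw [mul_comm (Real.exp (-(a * x ^ p)))]
        calc (p : ℝ) ^ n * Sfun (lam / p) n (a * x ^ p)
            = (p : ℝ) ^ n * Sfun (lam / p) n (a * x ^ p) *
              (Real.exp (-(a * x ^ p)) * Real.exp (a * x ^ p)) := by rw [h2]; ring
          _ = (p : ℝ) ^ n * (Sfun (lam / p) n (a * x ^ p) * Real.exp (-(a * x ^ p))) *
              Real.exp (a * x ^ p) := by ring
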